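/- For λ > 0 and p ∈ ℝ^4, let I²_{λ,p}(x) = Im( λ² (x̄ − p̄) dx / (|x−p|² (λ² + |x−p|²)) ) be the 1-instanton tail, viewed as an 𝔰𝔲(2)-valued 1-form with pointwise norm |I²_{λ,p}(x)| comparable to λ²/(|x−p|(λ²+|x−p|²)). Then ∫_{B^4 \ B_{λ/4}(p)} |I²_{λ,p}|² dx ≤ C λ² |log λ| for λ ∈ (0,1/2), with C independent of λ and p. -/

import Mathlib

open MeasureTheory Set Metric

private noncomputable abbrev instC4 : ℝ :=
  (volume (Metric.ball (0 : EuclideanSpace ℝ (Fin 4)) 1)).toReal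

private lemma instC4_pos : 0 < instC4 :=
  ENNReal.toReal_pos (measure_ball_pos volume _ one_pos).ne' measure_ball_lt_top.ne

private lemma g1_integrable (l : ℝ) (hl : 0 < l) (p : EuclideanSpace ℝ (Fin 4)) :
    Integrable (fun x : EuclideanSpace ℝ (Fin 4) =>
      (Icc (l/4) 2).indicator (fun r => (r^4)⁻¹) ‖x - p‖) := by
  have hA : (fun x : EuclideanSpace ℝ (Fin 4) =>
      (Icc (l/4) 2).indicator (fun r => (r^4)⁻¹) ‖x - p‖) =
      (closedBall p 2 \ ball p (l/4)).indicator
        (fun x => (‖x - p‖^4)⁻¹) := by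
    funext x
    have hmem : x ∈ closedBall p 2 \ ball p (l/4) ↔ (l/4 ≤ ‖x - p‖ ∧ ‖x - p‖ ≤ 2) := by
      simp [mem_diff, mem_closedBall, mem_ball, dist_eq_norm, not_lt, and_comm]
    simp only [indicator_apply, mem_Icc]
    by_cases h : l / 4 ≤ ‖x - p‖ ∧ ‖x - p‖ ≤ 2
    · rw [if_pos h, Set.indicator_of_mem (hmem.2 h)]
    · rw [if_neg h, Set.indicator_of_notMem (fun hc => h (hmem.1 hc))]
  rw [hA]
  have hcpt : IsCompact (closedBall p 2 \ ball p (l/4)) :=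
    (isCompact_closedBall p 2).diff isOpen_ball
  have hcont : ContinuousOn (fun x : EuclideanSpace ℝ (Fin 4) => (‖x - p‖^4)⁻¹)
      (closedBall p 2 \ ball p (l/4)) := by
    apply ContinuousOn.inv₀
    · exact ((continuous_norm.comp (continuous_id.sub continuous_const)).pow 4).continuousOn
    · intro x hx
      have h4 : l/4 ≤ ‖x - p‖ := by
        have := hx.2
        simpa [mem_ball, dist_eq_norm, not_lt] using this
      have h0 : 0 < ‖x - p‖ := lt_of_lt_of_le (by linarith) h4
      positivity
  exact (hcont.integrableOn_compact hcpt).integrable_indicator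
    (hcpt.isClosed.measurableSet)

private lemma g1_integral (l : ℝ) (hl : 0 < l) (hl2 : l < 1/2) (p : EuclideanSpace ℝ (Fin 4)) :
    (∫ x : EuclideanSpace ℝ (Fin 4),
      (Icc (l/4) 2).indicator (fun r => (r^4)⁻¹) ‖x - p‖) =
      4 * instC4 * Real.log (8 / l) := by
  have h1 : (∫ x : EuclideanSpace ℝ (Fin 4),
      (Icc (l/4) 2).indicator (fun r => (r^4)⁻¹) ‖x - p‖) =
      ∫ x : EuclideanSpace ℝ (Fin 4), (Icc (l/4) 2).indicator (fun r => (r^4)⁻¹) ‖x‖ :=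
    integral_sub_right_eq_self (fun x => (Icc (l/4) 2).indicator (fun r => (r^4)⁻¹) ‖x‖) p
  rw [h1, integral_fun_norm_addHaar volume (fun r => (Icc (l/4) 2).indicator (fun r => (r^4)⁻¹) r)]
  have hdim : Module.finrank ℝ (EuclideanSpace ℝ (Fin 4)) = 4 := by simp
  rw [hdim]
  have h2 : (∫ y in Ioi (0:ℝ), y ^ (4 - 1) • (Icc (l/4) 2).indicator (fun r => (r^4)⁻¹) y) =
      ∫ y in Ioi (0:ℝ), (Icc (l/4) 2).indicator (fun y => y⁻¹) y := by
    refine setIntegral_congr_fun measurableSet_Ioi fun y hy => ?_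
    simp only [indicator_apply, mem_Icc, smul_eq_mul]
    split
    · next h =>
      have hy0 : y ≠ 0 := ne_of_gt (lt_of_lt_of_le (by linarith) h.1)
      field_simp
    · simp
  rw [h2, setIntegral_indicator measurableSet_Icc]
  have h3 : Ioi (0:ℝ) ∩ Icc (l/4) 2 = Icc (l/4) 2 := by
    apply inter_eq_self_of_subset_right
    intro y hy
    exact lt_of_lt_of_le (by linarith) hy.1
  rw [h3, integral_Icc_eq_integral_Ioc, ← intervalIntegral.integral_of_le (by linarith),
    integral_inv_of_pos (by positivity) (by norm_num)]
  have h4 : (2:ℝ) / (l/4) = 8 / l := by field_simp; ring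
  rw [h4]
  simp only [nsmul_eq_mul, smul_eq_mul, instC4, measureReal_def]
  ring

/-- The instanton tail `I²_{λ,p}`, with pointwise norm comparable to
`λ²/(|x−p|(λ²+|x−p|²))`, satisfies
`∫_{B⁴ \ B_{λ/4}(p)} |I²_{λ,p}|² dx ≤ C λ² |log λ|` for `λ ∈ (0,1/2)`,
with `C` independent of `λ` and `p`. -/
theorem stmt_6 :
    ∃ C > (0 : ℝ), ∀ l : ℝ, 0 < l → l < 1 / 2 →
      ∀ p : EuclideanSpace ℝ (Fin 4),
        (∫ x in {x : EuclideanSpace ℝ (Fin 4) | ‖x‖ < 1 ∧ l / 4 ≤ ‖x - p‖},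
            (l ^ 2 / (‖x - p‖ * (l ^ 2 + ‖x - p‖ ^ 2))) ^ 2) ≤
          C * l ^ 2 * |Real.log l| := by
  set c := instC4 with hc_def
  have hc : 0 < c := instC4_pos
  refine ⟨5 * c + 1, by positivity, fun l hl hl2 p => ?_⟩
  set S := {x : EuclideanSpace ℝ (Fin 4) | ‖x‖ < 1 ∧ l / 4 ≤ ‖x - p‖} with hS_def
  set f₀ : EuclideanSpace ℝ (Fin 4) → ℝ :=
    fun x => (l ^ 2 / (‖x - p‖ * (l ^ 2 + ‖x - p‖ ^ 2))) ^ 2 with hf₀_def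
  set g₁ : EuclideanSpace ℝ (Fin 4) → ℝ :=
    fun x => (Icc (l/4) 2).indicator (fun r => (r^4)⁻¹) ‖x - p‖ with hg₁_def
  set g₂ : EuclideanSpace ℝ (Fin 4) → ℝ :=
    fun x => (ball (0 : EuclideanSpace ℝ (Fin 4)) 1).indicator (fun _ => (1:ℝ)) x with hg₂_def
  set g : EuclideanSpace ℝ (Fin 4) → ℝ :=
    fun x => l^2/4 * g₁ x + l^2/64 * g₂ x with hg_def
  have hSmeas : MeasurableSet S := by
    have : S = ball (0 : EuclideanSpace ℝ (Fin 4)) 1 ∩ (ball p (l/4))ᶜ := by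
      ext x
      simp [hS_def, mem_ball, dist_eq_norm, not_lt, mem_ball_zero_iff]
    rw [this]
    exact measurableSet_ball.inter measurableSet_ball.compl
  -- pointwise bound
  have hbound : ∀ x ∈ S, f₀ x ≤ g x := by
    intro x hx
    obtain ⟨hx1, hx2⟩ := hx
    set r := ‖x - p‖ with hr_def
    have hr : 0 < r := lt_of_lt_of_le (by positivity) hx2
    have hbase : f₀ x ≤ l^2 / (4 * r^4) := by
      have h1 : l^2 / (r * (l^2 + r^2)) ≤ l / (2 * r^2) := by
        rw [div_le_div_iff₀ (by positivity) (by positivity)]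
        have h2 : 2 * l * r ≤ l^2 + r^2 := two_mul_le_add_sq l r
        nlinarith [mul_le_mul_of_nonneg_left h2 (by positivity : (0:ℝ) ≤ l * r)]
      have h3 : (0:ℝ) ≤ l^2 / (r * (l^2 + r^2)) := by positivity
      calc f₀ x = (l^2 / (r * (l^2 + r^2)))^2 := rfl
        _ ≤ (l / (2 * r^2))^2 := by apply pow_le_pow_left₀ h3 h1
        _ = l^2 / (4 * r^4) := by rw [div_pow]; ring_nf
    have hg₂x : g₂ x = 1 := by
      simp [hg₂_def, indicator_apply, mem_ball_zero_iff, hx1]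
    by_cases hr2 : r ≤ 2
    · have hg₁x : g₁ x = (r^4)⁻¹ := by
        simp [hg₁_def, indicator_apply, mem_Icc, hx2, hr2]
        exact if_pos ⟨hx2, hr2⟩
      have : g x = l^2/4 * (r^4)⁻¹ + l^2/64 := by
        have hgx : g x = l^2/4 * g₁ x + l^2/64 * g₂ x := rfl
        rw [hgx, hg₁x, hg₂x]; ring
      rw [this]
      have : l^2 / (4 * r^4) = l^2/4 * (r^4)⁻¹ := by field_simp
      nlinarith [hbase, sq_nonneg l]
    · have hg₁x : g₁ x = 0 := by
        simp only [hg₁_def, indicator_apply, mem_Icc]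
        rw [if_neg]
        push_neg
        intro _; linarith
      have hgx : g x = l^2/64 := by
        have hgx' : g x = l^2/4 * g₁ x + l^2/64 * g₂ x := rfl
        rw [hgx', hg₁x, hg₂x]; ring
      rw [hgx]
      have hr2' : (2:ℝ) < r := not_le.1 hr2
      have hsq : (4:ℝ) ≤ r^2 := by nlinarith
      have hr4 : (16:ℝ) ≤ r^4 := by
        nlinarith [mul_nonneg (by linarith : (0:ℝ) ≤ r^2 - 4) (by positivity : (0:ℝ) ≤ r^2 + 4)]
      have : l^2 / (4 * r^4) ≤ l^2 / 64 := by
        apply div_le_div_of_nonneg_left (by positivity) (by norm_num)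
        nlinarith
      linarith [hbase]
  -- integrability
  have hg₁int : Integrable g₁ := g1_integrable l hl p
  have hg₂int : Integrable g₂ := by
    apply (integrable_indicator_iff measurableSet_ball).2
    exact integrableOn_const measure_ball_lt_top.ne
  have hgint : Integrable g := by
    exact (hg₁int.const_mul _).add (hg₂int.const_mul _)
  have hgnn : ∀ x, 0 ≤ g x := by
    intro x
    have h1 : 0 ≤ g₁ x := indicator_nonneg (fun r _ => by positivity) _
    have h2 : 0 ≤ g₂ x := indicator_nonneg (fun r _ => by norm_num) _
    have : 0 ≤ l^2/4 := by positivity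
    positivity
  have hf₀meas : AEStronglyMeasurable f₀ (volume.restrict S) := by
    apply Measurable.aestronglyMeasurable
    fun_prop
  have hf₀int : IntegrableOn f₀ S := by
    apply Integrable.mono' hgint.integrableOn hf₀meas
    filter_upwards [ae_restrict_mem hSmeas] with x hx
    rw [Real.norm_eq_abs, abs_of_nonneg (by positivity)]
    exact hbound x hx
  -- the chain
  have hlogl : Real.log l < 0 := Real.log_neg hl (by linarith)
  have habs : |Real.log l| = -Real.log l := abs_of_neg hlogl
  have hlog2 : Real.log 2 ≤ -Real.log l := by
    have := Real.log_le_log hl (le_of_lt (by linarith : l < 1/2))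
    rw [show (1:ℝ)/2 = 2⁻¹ by norm_num, Real.log_inv] at this
    linarith
  have hlog2pos : (0.6931471803:ℝ) < Real.log 2 := Real.log_two_gt_d9
  have hlog8 : Real.log (8/l) = 3 * Real.log 2 - Real.log l := by
    rw [Real.log_div (by norm_num) hl.ne', show (8:ℝ) = 2^3 by norm_num, Real.log_pow]
    push_cast; ring
  calc (∫ x in S, f₀ x)
      ≤ ∫ x in S, g x := setIntegral_mono_on hf₀int hgint.integrableOn hSmeas hbound
    _ ≤ ∫ x, g x := setIntegral_le_integral hgint (Filter.Eventually.of_forall hgnn)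
    _ = l^2/4 * (∫ x, g₁ x) + l^2/64 * (∫ x, g₂ x) := by
        rw [hg_def]
        rw [integral_add (hg₁int.const_mul _) (hg₂int.const_mul _),
          integral_const_mul, integral_const_mul]
    _ = l^2/4 * (4 * c * Real.log (8/l)) + l^2/64 * c := by
        rw [g1_integral l hl hl2 p]
        congr 1
        rw [hg₂_def]
        rw [integral_indicator_const (1:ℝ) measurableSet_ball]
        simp [hc_def, instC4, measureReal_def]
    _ ≤ (5 * c + 1) * l ^ 2 * |Real.log l| := by
        rw [habs, hlog8]
        have hl2pos : 0 < l^2 := by positivity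
        nlinarith [mul_nonneg (mul_nonneg hl2pos.le hc.le) (sub_nonneg.2 hlog2),
          mul_nonneg (mul_nonneg hl2pos.le hc.le) (by linarith : (0:ℝ) ≤ Real.log 2 - 1/64),
          mul_nonneg hl2pos.le (neg_nonneg.2 hlogl.le)]
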